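/- If a finite simple undirected graph G has a Hamilton path, then there exists an orientation D of G (a digraph obtained by assigning a direction to each edge of G) and a single vertex u such that the singleton {u} propagates to D. Specifically, orienting the edges of the Hamilton path forward (from its first vertex u toward its last) and all remaining edges backward (from the later vertex of the path order to the earlier one) yields such an orientation, with P_{{u}}(t) = the first t+1 vertices of the Hamilton path. -/

import Mathlib

/-- The propagation closure: `PropReach G S v` means vertex `v` eventually receives the
information when the process starts from the set `S` on the graph `G`.  A vertex `w` can be
added whenever some vertex `v` already having the information is adjacent to `w` and every
neighbour of `v` other than `w` already has the information. -/
inductive PropReach {V : Type*} (G : SimpleGraph V) (S : Set V) : V → Prop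
  | base {v : V} (hv : v ∈ S) : PropReach G S v
  | step {v w : V} (hv : PropReach G S v) (hadj : G.Adj v w)
      (hall : ∀ x : V, G.Adj v x → x ≠ w → PropReach G S x) : PropReach G S w

/-- `S ↷ G` : the set `S` propagates to (all of) the graph `G`. -/
def Propagates {V : Type*} (G : SimpleGraph V) (S : Set V) : Prop :=
  ∀ v : V, PropReach G S v

/-- `π(G)`: the minimum cardinality of a set of vertices propagating to `G`. -/
noncomputable def propNum {V : Type*} (G : SimpleGraph V) : ℕ :=
  sInf {n : ℕ | ∃ S : Set V, S.ncard = n ∧ Propagates G S}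


/-- Propagation closure on a digraph: `w` can be added whenever some vertex `v` already having
the information has an arc to `w` and every out-neighbour of `v` other than `w` already has
the information. -/
inductive DPropReach {V : Type*} (D : Digraph V) (S : Set V) : V → Prop
  | base {v : V} (hv : v ∈ S) : DPropReach D S v
  | step {v w : V} (hv : DPropReach D S v) (harc : D.Adj v w)
      (hall : ∀ x : V, D.Adj v x → x ≠ w → DPropReach D S x) : DPropReach D S w

/-- `S` propagates to all of the digraph `D`. -/
def DPropagates {V : Type*} (D : Digraph V) (S : Set V) : Prop :=
  ∀ v : V, DPropReach D S v

/-- `D` is an orientation of the simple graph `G`: every arc of `D` lies on an edge of `G`,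
and each edge of `G` is given exactly one of its two possible directions. -/
def IsOrientation {V : Type*} (G : SimpleGraph V) (D : Digraph V) : Prop :=
  (∀ a b : V, D.Adj a b → G.Adj a b) ∧
  (∀ a b : V, G.Adj a b → (D.Adj a b ↔ ¬ D.Adj b a))

/-- The orientation of `G` induced by a Hamilton path `p`: the edges of `p` are oriented
forward (from the first vertex of `p` toward its last), and every remaining edge is oriented
backward (from the later vertex in the path order to the earlier one). -/
def hamOrient {V : Type*} [DecidableEq V] (G : SimpleGraph V) {u w : V} (p : G.Walk u w) :
    Digraph V :=
  ⟨fun a b => G.Adj a b ∧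
    (p.support.idxOf b = p.support.idxOf a + 1 ∨
      (p.support.idxOf b < p.support.idxOf a ∧
        p.support.idxOf a ≠ p.support.idxOf b + 1))⟩

/-- If a graph `G` has a Hamilton path, then some orientation `D` of `G`
admits a single vertex propagating to `D`; specifically, orienting the edges of the Hamilton
path forward and all remaining edges backward yields such an orientation, with the singleton
consisting of the first vertex of the path propagating to it. -/

private lemma support_getElem_eq_getVert' {V : Type*} {G : SimpleGraph V} {u w : V}
    (p : G.Walk u w) (i : ℕ) (h : i < p.support.length) : p.support[i] = p.getVert i := by
  induction p generalizing i with
  | nil => simp_all [SimpleGraph.Walk.support_nil, SimpleGraph.Walk.getVert_of_length_le]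
  | cons hadj q ih =>
    cases i with
    | zero => simp
    | succ n =>
      simp only [SimpleGraph.Walk.support_cons] at h ⊢
      rw [List.getElem_cons_succ, ih n (by simpa using h), SimpleGraph.Walk.getVert_cons_succ]

theorem orientation_singleton_propagates_of_hamiltonianPath
    {V : Type*} [DecidableEq V] (G : SimpleGraph V) (u w : V) (p : G.Walk u w)
    (hp : p.IsHamiltonian) :
    (∃ (D : Digraph V) (u₀ : V), IsOrientation G D ∧ DPropagates D {u₀}) ∧
    IsOrientation G (hamOrient G p) ∧ DPropagates (hamOrient G p) {u}  := by
  classical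
  have hmem : ∀ v : V, v ∈ p.support := fun v =>
    List.count_pos_iff.mp (by rw [hp v]; norm_num)
  have ns : p.support.Nodup := List.nodup_iff_count_le_one.mpr fun a => (hp a).le
  have horient : IsOrientation G (hamOrient G p) := by
    constructor
    · intro a b h; exact h.1
    · intro a b hab
      have hidx : p.support.idxOf a ≠ p.support.idxOf b := fun h =>
        hab.ne ((List.idxOf_inj (hmem a)).mp h)
      have hba := hab.symm
      show (G.Adj a b ∧ (p.support.idxOf b = p.support.idxOf a + 1 ∨
          (p.support.idxOf b < p.support.idxOf a ∧
            p.support.idxOf a ≠ p.support.idxOf b + 1))) ↔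
        ¬ (G.Adj b a ∧ (p.support.idxOf a = p.support.idxOf b + 1 ∨
          (p.support.idxOf a < p.support.idxOf b ∧
            p.support.idxOf b ≠ p.support.idxOf a + 1)))
      simp only [hab, hba, true_and]
      omega
  have key : ∀ k, ∀ hk : k < p.support.length, DPropReach (hamOrient G p) {u} p.support[k] := by
    intro k
    induction k using Nat.strong_induction_on with
    | _ k ih =>
      intro hk
      match k with
      | 0 =>
        have h0 : p.support[0] = u := by
          rw [support_getElem_eq_getVert' p 0 hk, SimpleGraph.Walk.getVert_zero]
        rw [h0]
        exact DPropReach.base rfl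
      | k + 1 =>
        have hk' : k < p.support.length := by omega
        have hlen : p.support.length = p.length + 1 := SimpleGraph.Walk.length_support p
        have hadjvw : G.Adj p.support[k] p.support[k + 1] := by
          rw [support_getElem_eq_getVert' p k hk', support_getElem_eq_getVert' p (k + 1) hk]
          exact p.adj_getVert_succ (by omega)
        have hiv : p.support.idxOf p.support[k] = k := ns.idxOf_getElem k hk'
        have hiw : p.support.idxOf p.support[k + 1] = k + 1 := ns.idxOf_getElem (k + 1) hk
        refine DPropReach.step (ih k (lt_add_one k) hk')
          ⟨hadjvw, Or.inl (by rw [hiv, hiw])⟩ ?_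
        intro x hx hxw
        obtain ⟨hGx, hidxx⟩ := hx
        have hxlt : p.support.idxOf x < k := by
          rcases hidxx with h | h
          · exfalso
            apply hxw
            exact (List.idxOf_inj (hmem x)).mp (by rw [hiw, hiv] at *; omega)
          · omega
        have hxlen : p.support.idxOf x < p.support.length := List.idxOf_lt_length_iff.mpr (hmem x)
        have hxe : p.support[p.support.idxOf x] = x := List.getElem_idxOf hxlen
        rw [← hxe]
        exact ih _ (by omega) hxlen
  have hprop : DPropagates (hamOrient G p) {u} := by
    intro v
    have hvl : p.support.idxOf v < p.support.length := List.idxOf_lt_length_iff.mpr (hmem v)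
    have := key _ hvl
    rwa [List.getElem_idxOf hvl] at this
  exact ⟨⟨_, u, horient, hprop⟩, horient, hprop⟩
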